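/- (Uniqueness of the Baxter polynomial in the case k1 = 0, from the proof of Theorem 5.1.) Assume η ≠ 0, k2 ≠ 0 and the genericity condition. Fix indices h = (h_1,…,h_N) with h_n ∈ {0,…,d_n} and set t_h(X) := k2·∏_{n=1}^N (X − ζ_{n,h_n}) and Q_h(X) := ∏_{n=1}^N ∏_{k=0}^{h_n−1} (X − ζ_{n,k}). Then every polynomial Q ∈ ℂ[X] satisfying t_h(X)·Q(X) = k2·d(X)·Q(X+η) is a scalar multiple of Q_h. -/

import Mathlib

open Polynomial Finset

noncomputable section

/-- The shifted inhomogeneity points `ζ_{n,k} = ξ_n + (d_n − 1)η/2 − k·η`. -/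
def zeta {N : ℕ} (d : Fin N → ℕ) (ξ : Fin N → ℂ) (η : ℂ) (n : Fin N) (k : ℕ) : ℂ :=
  ξ n + ((d n : ℂ) - 1) * η / 2 - (k : ℂ) * η

/-- `d(X) = ∏ₙ (X − ζ_{n,0})`. -/
def dpol {N : ℕ} (d : Fin N → ℕ) (ξ : Fin N → ℂ) (η : ℂ) : Polynomial ℂ :=
  ∏ n : Fin N, (X - C (zeta d ξ η n 0))

/-- A polynomial invariant under a nontrivial shift is constant. -/
lemma shift_invariant_const {η : ℂ} (hη : η ≠ 0) {p : Polynomial ℂ}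
    (hp : p.comp (X + C η) = p) : ∃ c : ℂ, p = C c := by
  refine ⟨p.eval 0, ?_⟩
  apply Polynomial.eq_of_infinite_eval_eq
  have hev : ∀ x : ℂ, p.eval (x + η) = p.eval x := by
    intro x
    conv_rhs => rw [← hp]
    simp [eval_comp]
  have hnat : ∀ n : ℕ, p.eval (n * η) = p.eval 0 := by
    intro n
    induction n with
    | zero => simp
    | succ n ih =>
        have : ((n : ℂ) + 1) * η = n * η + η := by ring
        rw [Nat.cast_succ, this, hev, ih]
  apply Set.infinite_of_injective_forall_mem (f := fun n : ℕ => (n : ℂ) * η)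
  · intro a b hab
    have h2 : (a : ℂ) = b := mul_right_cancel₀ hη hab
    exact_mod_cast h2
  · intro n
    simp only [Set.mem_setOf_eq, hnat, eval_C]

/-- A nonzero polynomial dividing its own shift is constant. -/
lemma dvd_shift_const {η : ℂ} (hη : η ≠ 0) {p : Polynomial ℂ} (hp : p ≠ 0)
    (hd : p ∣ p.comp (X + C η)) : ∃ c : ℂ, p = C c := by
  obtain ⟨r, hr⟩ := hd
  have hxc : (X + C η : Polynomial ℂ).natDegree = 1 := by
    simp [natDegree_X_add_C]
  have hcomp0 : p.comp (X + C η) ≠ 0 := by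
    intro h0
    apply hp
    have h2 : (p.comp (X + C η)).comp (X - C η) = p := by
      rw [Polynomial.comp_assoc]
      simp
    rw [h0, zero_comp] at h2
    exact h2.symm
  have hr0 : r ≠ 0 := by
    intro h0; rw [h0, mul_zero] at hr; exact hcomp0 hr
  have hdeg : p.natDegree = p.natDegree + r.natDegree := by
    have h2 := natDegree_comp (p := p) (q := X + C η)
    rw [hxc, mul_one] at h2
    conv_lhs => rw [← h2, hr]
    rw [natDegree_mul hp hr0]
  have hrdeg : r.natDegree = 0 := by omega
  obtain ⟨c0, rfl⟩ : ∃ c0, r = C c0 := ⟨r.coeff 0, (Polynomial.eq_C_of_natDegree_eq_zero hrdeg)⟩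
  have hlc : p.leadingCoeff = p.leadingCoeff * c0 := by
    have h1 := leadingCoeff_comp (p := p) (q := X + C η) (by rw [hxc]; norm_num)
    rw [leadingCoeff_X_add_C, one_pow, mul_one] at h1
    rw [hr, leadingCoeff_mul, leadingCoeff_C] at h1
    exact h1.symm
  have hc0 : c0 = 1 := by
    have hlp : p.leadingCoeff ≠ 0 := leadingCoeff_ne_zero.mpr hp
    have h2 : p.leadingCoeff * 1 = p.leadingCoeff * c0 := by rw [mul_one, ← hlc]
    exact (mul_left_cancel₀ hlp h2).symm
  rw [hc0, map_one, mul_one] at hr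
  exact shift_invariant_const hη hr

/-- If `Q·P(X+η) = Q(X+η)·P` with `P ≠ 0`, then `Q` is a scalar multiple of `P`. -/
lemma wronskian_scalar {η : ℂ} (hη : η ≠ 0) {Q P : Polynomial ℂ} (hP : P ≠ 0)
    (hw : Q * P.comp (X + C η) = Q.comp (X + C η) * P) : ∃ c : ℂ, Q = C c * P := by
  by_cases hQ0 : Q = 0
  · exact ⟨0, by simp [hQ0]⟩
  set g := GCDMonoid.gcd Q P with hg
  have hgne : g ≠ 0 := gcd_ne_zero_of_right hP
  set A := Q / g with hA
  set B := P / g with hB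
  have hQg : g * A = Q := EuclideanDomain.mul_div_cancel' hgne (gcd_dvd_left Q P)
  have hPg : g * B = P := EuclideanDomain.mul_div_cancel' hgne (gcd_dvd_right Q P)
  have hco : IsCoprime A B := isCoprime_div_gcd_div_gcd hP
  have hA0 : A ≠ 0 := by intro h0; rw [h0, mul_zero] at hQg; exact hQ0 hQg.symm
  have hB0 : B ≠ 0 := by intro h0; rw [h0, mul_zero] at hPg; exact hP hPg.symm
  have hgc : g * g.comp (X + C η) ≠ 0 := by
    apply mul_ne_zero hgne
    intro h0
    apply hgne
    have h2 : (g.comp (X + C η)).comp (X - C η) = g := by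
      rw [Polynomial.comp_assoc]
      simp
    rw [h0, zero_comp] at h2
    exact h2.symm
  have hw2 : (g * g.comp (X + C η)) * (A * B.comp (X + C η))
      = (g * g.comp (X + C η)) * (A.comp (X + C η) * B) := by
    have := hw
    rw [← hQg, ← hPg, mul_comp, mul_comp] at this
    ring_nf at this ⊢
    linear_combination this
  have hw3 : A * B.comp (X + C η) = A.comp (X + C η) * B := mul_left_cancel₀ hgc hw2
  have hBd : B ∣ B.comp (X + C η) := by
    have h2 : B ∣ A * B.comp (X + C η) := by
      rw [hw3]; exact dvd_mul_left _ _
    exact hco.symm.dvd_of_dvd_mul_left h2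
  have hAd : A ∣ A.comp (X + C η) := by
    have h2 : A ∣ A.comp (X + C η) * B := by
      rw [← hw3]; exact dvd_mul_right _ _
    exact hco.dvd_of_dvd_mul_right h2
  obtain ⟨a, ha⟩ := dvd_shift_const hη hA0 hAd
  obtain ⟨b, hb⟩ := dvd_shift_const hη hB0 hBd
  have hbne : b ≠ 0 := by intro h0; rw [h0, map_zero] at hb; exact hB0 hb
  refine ⟨a / b, ?_⟩
  rw [← hQg, ← hPg, ha, hb]
  rw [← mul_assoc, mul_comm (C (a/b)) g, mul_assoc, ← map_mul]
  congr 2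
  field_simp

/-- Uniqueness (up to scalar) of the Baxter polynomial in the case `k1 = 0`:
every polynomial solution `Q` of `t_h·Q = k2·d·Q(X+η)` is a scalar multiple of
`Q_h = ∏ₙ ∏_{k<hₙ} (X − ζ_{n,k})`. -/
theorem statement8 {N : ℕ} (hN : 1 ≤ N) (d : Fin N → ℕ) (hd : ∀ n, 1 ≤ d n)
    (ξ : Fin N → ℂ) (η k2 : ℂ) (hη : η ≠ 0) (hk2 : k2 ≠ 0)
    (hgen : ∀ n m : Fin N, ∀ k j : ℕ, k ≤ d n → j ≤ d m →
      zeta d ξ η n k = zeta d ξ η m j → n = m ∧ k = j)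
    (h : Fin N → ℕ) (hh : ∀ n, h n ≤ d n)
    (Q : Polynomial ℂ)
    (hQ : (C k2 * ∏ n : Fin N, (X - C (zeta d ξ η n (h n)))) * Q
      = C k2 * dpol d ξ η * Q.comp (X + C η)) :
    ∃ c : ℂ, Q = C c * ∏ n : Fin N, ∏ k ∈ Finset.range (h n), (X - C (zeta d ξ η n k)) := by
  set P : Polynomial ℂ := ∏ n : Fin N, ∏ k ∈ Finset.range (h n), (X - C (zeta d ξ η n k)) with hPdef
  set t : Polynomial ℂ := ∏ n : Fin N, (X - C (zeta d ξ η n (h n))) with htdef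
  have hzeta : ∀ (n : Fin N) (k : ℕ), zeta d ξ η n (k + 1) = zeta d ξ η n k - η := by
    intro n k; unfold zeta; push_cast; ring
  -- the key identity: t * P = dpol * P.comp (X + C η)
  have hkey : t * P = dpol d ξ η * P.comp (X + C η) := by
    rw [htdef, hPdef, dpol, Polynomial.prod_comp]
    rw [← prod_mul_distrib, ← prod_mul_distrib]
    refine Finset.prod_congr rfl fun n _ => ?_
    have hfac : ∀ k ∈ Finset.range (h n),
        (X - C (zeta d ξ η n k)).comp (X + C η) = X - C (zeta d ξ η n (k + 1)) := by
      intro k _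
      rw [sub_comp, X_comp, C_comp, hzeta, map_sub]
      ring
    calc (X - C (zeta d ξ η n (h n))) * (∏ k ∈ Finset.range (h n), (X - C (zeta d ξ η n k)))
        = ∏ k ∈ Finset.range (h n + 1), (X - C (zeta d ξ η n k)) := by
          rw [Finset.prod_range_succ]; ring
      _ = (∏ k ∈ Finset.range (h n), (X - C (zeta d ξ η n (k + 1)))) * (X - C (zeta d ξ η n 0)) :=
          Finset.prod_range_succ' _ _
      _ = (X - C (zeta d ξ η n 0)) * (∏ k ∈ Finset.range (h n), (X - C (zeta d ξ η n k)) : ℂ[X]).comp (X + C η) := by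
          have hp : (∏ k ∈ Finset.range (h n), (X - C (zeta d ξ η n k)) : ℂ[X]).comp (X + C η)
              = ∏ k ∈ Finset.range (h n), (X - C (zeta d ξ η n (k + 1))) := by
            rw [Polynomial.prod_comp]
            exact Finset.prod_congr rfl hfac
          rw [hp]
          exact mul_comm _ _
  have hCk2 : (C k2 : Polynomial ℂ) ≠ 0 := fun h0 => hk2 (by simpa using h0)
  have hQ' : t * Q = dpol d ξ η * Q.comp (X + C η) := by
    apply mul_left_cancel₀ hCk2
    rw [← mul_assoc, ← mul_assoc]
    exact hQ
  have hdne : dpol d ξ η ≠ 0 := by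
    rw [dpol]
    apply Finset.prod_ne_zero_iff.mpr
    intro n _
    exact X_sub_C_ne_zero _
  have hPne : P ≠ 0 := by
    rw [hPdef]
    apply Finset.prod_ne_zero_iff.mpr
    intro n _
    apply Finset.prod_ne_zero_iff.mpr
    intro k _
    exact X_sub_C_ne_zero _
  have hw : Q * P.comp (X + C η) = Q.comp (X + C η) * P := by
    apply mul_left_cancel₀ hdne
    calc dpol d ξ η * (Q * P.comp (X + C η))
        = Q * (dpol d ξ η * P.comp (X + C η)) := by ring
      _ = Q * (t * P) := by rw [hkey]
      _ = (t * Q) * P := by ring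
      _ = (dpol d ξ η * Q.comp (X + C η)) * P := by rw [hQ']
      _ = dpol d ξ η * (Q.comp (X + C η) * P) := by ring
  exact wronskian_scalar hη hPne hw
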